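/- Let μ_0 be a fully supported probability measure on a finite set X and μ_1 ≠ μ_0 another probability measure on X. Then there exists δ > 0 such that limsup_{N→∞} (1/N) log μ_0^{⊗N}(Δ(μ_1;N,δ)) < 0, where Δ(μ_1;N,δ) = {x ∈ X^N : |ν_x(t) − μ_1(t)| ≤ δ for all t ∈ X}. -/

import Mathlib

open Finset Real Classical Filter

lemma exp_le_quad {u : ℝ} (hu : |u| ≤ 1) : Real.exp u ≤ 1 + u + u ^ 2 := by
  have h := Real.exp_bound hu (n := 2) (by norm_num)
  have h2 : ∑ i ∈ range 2, u ^ i / (Nat.factorial i : ℝ) = 1 + u := by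
    simp [Finset.sum_range_succ, Nat.factorial]
  rw [h2] at h
  norm_num [Nat.factorial] at h
  have := abs_le.1 h
  nlinarith [sq_abs u, sq_nonneg u, this.2]

lemma sum_prod_pow {X : Type*} [Fintype X] (f : X → ℝ) (N : ℕ) :
    ∑ x : Fin N → X, ∏ j, f (x j) = (∑ t, f t) ^ N := by
  rw [← Fin.prod_const N (∑ t, f t), Finset.prod_univ_sum]
  simp

lemma chernoff {X : Type*} [Fintype X] (w : X → ℝ) (hw : ∀ t, 0 ≤ w t)
    (hw1 : ∑ t, w t = 1) (P : X → Prop) [DecidablePred P] (a : ℝ)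
    (hpa : ∑ t ∈ univ.filter P, w t < a) (ha1 : a ≤ 1) :
    ∃ r : ℝ, 0 < r ∧ r < 1 ∧ ∀ N : ℕ,
      ∑ x ∈ univ.filter (fun x : Fin N → X =>
          a * N ≤ ((univ.filter (fun j => P (x j))).card : ℝ)),
        ∏ j, w (x j) ≤ r ^ N := by
  classical
  set p : ℝ := ∑ t ∈ univ.filter P, w t with hp
  have hp0 : 0 ≤ p := Finset.sum_nonneg fun t _ => hw t
  have hp1 : p ≤ 1 := by
    rw [← hw1]
    exact Finset.sum_le_sum_of_subset_of_nonneg (Finset.filter_subset _ _)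
      (fun t _ _ => hw t)
  have ha0 : 0 < a := lt_of_le_of_lt hp0 hpa
  set L : ℝ := min 1 ((a - p) / 2) with hL
  have hL0 : 0 < L := lt_min one_pos (by linarith)
  have hL1 : L ≤ 1 := min_le_left _ _
  have hLap : L ≤ (a - p) / 2 := min_le_right _ _
  set r : ℝ := Real.exp (-(L * a)) * (p * Real.exp L + (1 - p)) with hr
  have hmom : p * Real.exp L + (1 - p) ≥ 1 := by
    nlinarith [Real.one_le_exp hL0.le]
  have hr0 : 0 < r := mul_pos (Real.exp_pos _) (by linarith)
  have hr1 : r < 1 := by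
    have e1 : Real.exp (L * (1 - a)) ≤ 1 + L * (1 - a) + (L * (1 - a)) ^ 2 := by
      apply exp_le_quad
      rw [abs_of_nonneg (by nlinarith)]
      nlinarith
    have e2 : Real.exp (-(L * a)) ≤ 1 + (-(L * a)) + (-(L * a)) ^ 2 := by
      apply exp_le_quad
      rw [abs_of_nonpos (by nlinarith)]
      nlinarith
    have key : r = p * Real.exp (L * (1 - a)) + (1 - p) * Real.exp (-(L * a)) := by
      rw [hr, mul_add, mul_comm (Real.exp (-(L * a))) (p * Real.exp L), mul_assoc,
        ← Real.exp_add]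
      ring_nf
    rw [key]
    have c1 : p * Real.exp (L * (1 - a)) ≤ p * (1 + L * (1 - a) + (L * (1 - a)) ^ 2) :=
      mul_le_mul_of_nonneg_left e1 hp0
    have c2 : (1 - p) * Real.exp (-(L * a)) ≤ (1 - p) * (1 + (-(L * a)) + (-(L * a)) ^ 2) :=
      mul_le_mul_of_nonneg_left e2 (by linarith)
    nlinarith [sq_nonneg L, sq_nonneg (1 - a), sq_nonneg a,
      mul_pos hL0 (by linarith : (0:ℝ) < a - p)]
  refine ⟨r, hr0, hr1, fun N => ?_⟩
  have step1 : ∀ x ∈ univ.filter (fun x : Fin N → X =>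
      a * N ≤ ((univ.filter (fun j => P (x j))).card : ℝ)),
      ∏ j, w (x j) ≤ Real.exp (-(L * a) * N) *
        ∏ j, (w (x j) * Real.exp (if P (x j) then L else 0)) := by
    intro x hx
    rw [Finset.mem_filter] at hx
    have hcard : (((univ.filter (fun j => P (x j))).card : ℝ)) =
        ∑ j : Fin N, (if P (x j) then (1:ℝ) else 0) := by
      rw [Finset.card_filter]
      push_cast
      simp
    have hprodexp : ∏ j : Fin N, Real.exp (if P (x j) then L else 0)
        = Real.exp (L * ((univ.filter (fun j => P (x j))).card : ℝ)) := by
      rw [← Real.exp_sum, hcard, Finset.mul_sum]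
      congr 1
      apply Finset.sum_congr rfl
      intro j _
      by_cases h : P (x j) <;> simp [h]
    rw [Finset.prod_mul_distrib, hprodexp]
    have hfac : 1 ≤ Real.exp (-(L * a) * N) *
        Real.exp (L * ((univ.filter (fun j => P (x j))).card : ℝ)) := by
      rw [← Real.exp_add, show (1:ℝ) = Real.exp 0 by simp]
      apply Real.exp_le_exp.2
      have := hx.2
      nlinarith
    have hprodnn : 0 ≤ ∏ j, w (x j) := Finset.prod_nonneg fun j _ => hw _
    calc ∏ j, w (x j) = 1 * ∏ j, w (x j) := by ring
      _ ≤ (Real.exp (-(L * a) * N) *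
          Real.exp (L * ((univ.filter (fun j => P (x j))).card : ℝ))) * ∏ j, w (x j) :=
        mul_le_mul_of_nonneg_right hfac hprodnn
      _ = _ := by ring
  calc ∑ x ∈ univ.filter (fun x : Fin N → X =>
          a * N ≤ ((univ.filter (fun j => P (x j))).card : ℝ)), ∏ j, w (x j)
      ≤ ∑ x ∈ univ.filter (fun x : Fin N → X =>
          a * N ≤ ((univ.filter (fun j => P (x j))).card : ℝ)),
        Real.exp (-(L * a) * N) * ∏ j, (w (x j) * Real.exp (if P (x j) then L else 0)) :=
        Finset.sum_le_sum step1
    _ ≤ ∑ x : Fin N → X,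
        Real.exp (-(L * a) * N) * ∏ j, (w (x j) * Real.exp (if P (x j) then L else 0)) := by
        apply Finset.sum_le_sum_of_subset_of_nonneg (Finset.filter_subset _ _)
        intro x _ _
        exact mul_nonneg (Real.exp_pos _).le
          (Finset.prod_nonneg fun j _ => mul_nonneg (hw _) (Real.exp_pos _).le)
    _ = Real.exp (-(L * a) * N) * (∑ t, w t * Real.exp (if P t then L else 0)) ^ N := by
        have e := sum_prod_pow (fun t => w t * Real.exp (if P t then L else 0)) N
        rw [← Finset.mul_sum, e]
    _ = r ^ N := by
        have hsum : ∑ t, w t * Real.exp (if P t then L else 0)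
            = p * Real.exp L + (1 - p) := by
          rw [← Finset.sum_filter_add_sum_filter_not univ P]
          have h1 : ∑ t ∈ univ.filter P, w t * Real.exp (if P t then L else 0)
              = p * Real.exp L := by
            rw [hp, Finset.sum_mul]
            apply Finset.sum_congr rfl
            intro t ht
            rw [Finset.mem_filter] at ht
            simp [ht.2]
          have h2 : ∑ t ∈ univ.filter (fun t => ¬ P t), w t * Real.exp (if P t then L else 0)
              = 1 - p := by
            have e : ∑ t ∈ univ.filter (fun t => ¬ P t), w t * Real.exp (if P t then L else 0)
                = ∑ t ∈ univ.filter (fun t => ¬ P t), w t := by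
              apply Finset.sum_congr rfl
              intro t ht
              rw [Finset.mem_filter] at ht
              simp [ht.2]
            rw [e, hp]
            have := Finset.sum_filter_add_sum_filter_not univ P w
            linarith [hw1]
          rw [h1, h2]
        rw [hsum, hr, mul_pow, ← Real.exp_nat_mul]
        ring_nf

lemma exists_count {X : Type*} [Fintype X] (k : X → ℕ) (N : ℕ) (h : ∑ t, k t = N) :
    ∃ x : Fin N → X, ∀ t, ((univ.filter (fun j => x j = t)).card) = k t := by
  classical
  have hcard : Fintype.card (Σ t : X, Fin (k t)) = N := by
    simp [Fintype.card_sigma, h]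
  let e : (Σ t : X, Fin (k t)) ≃ Fin N := Fintype.equivFinOfCardEq hcard
  refine ⟨fun j => (e.symm j).1, fun t => ?_⟩
  have h1 : (univ.filter (fun j : Fin N => (e.symm j).1 = t)).card
      = (univ.filter (fun s : Σ t : X, Fin (k t) => s.1 = t)).card := by
    apply Finset.card_bij (fun j _ => e.symm j)
    · intro j hj
      simp only [Finset.mem_filter, Finset.mem_univ, true_and] at hj ⊢
      exact hj
    · intro j₁ _ j₂ _ hj
      exact e.symm.injective hj
    · intro s hs
      refine ⟨e s, ?_, by simp⟩
      simp only [Finset.mem_filter, Finset.mem_univ, true_and, Equiv.symm_apply_apply] at hs ⊢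
      exact hs
  rw [h1]
  have h2 : (univ.filter (fun s : Σ t : X, Fin (k t) => s.1 = t)).card
      = Fintype.card {s : Σ t : X, Fin (k t) // s.1 = t} := (Fintype.card_subtype _).symm
  rw [h2]
  have e2 : {s : Σ t : X, Fin (k t) // s.1 = t} ≃ Fin (k t) :=
    { toFun := fun s => Fin.cast (congrArg k s.2) s.1.2
      invFun := fun i => ⟨⟨t, i⟩, rfl⟩
      left_inv := by rintro ⟨⟨t', i⟩, rfl⟩; rfl
      right_inv := fun i => rfl }
  rw [Fintype.card_congr e2, Fintype.card_fin]

lemma deviation_bound {X : Type*} [Fintype X] (μ₀ μ₁ : X → ℝ) (δ : ℝ)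
    (hμ₀ : ∀ t, 0 < μ₀ t) (hμ₀1 : ∑ t, μ₀ t = 1)
    (P : X → Prop) [DecidablePred P] (a : ℝ)
    (hpa : ∑ t ∈ univ.filter P, μ₀ t < a) (ha1 : a ≤ 1)
    (hincl : ∀ (N : ℕ) (x : Fin N → X),
      (∀ t, |((univ.filter (fun j => x j = t)).card : ℝ) / N - μ₁ t| ≤ δ) →
      a * N ≤ ((univ.filter (fun j => P (x j))).card : ℝ)) :
    ∃ r : ℝ, 0 < r ∧ r < 1 ∧ ∀ N : ℕ,
      ∑ x ∈ Finset.univ.filter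
          (fun x : Fin N → X => ∀ t : X,
            |((Finset.univ.filter (fun j : Fin N => x j = t)).card : ℝ) / N
              - μ₁ t| ≤ δ),
        ∏ j : Fin N, μ₀ (x j) ≤ r ^ N := by
  obtain ⟨r, hr0, hr1, hbd⟩ := chernoff μ₀ (fun t => (hμ₀ t).le) hμ₀1 P a hpa ha1
  refine ⟨r, hr0, hr1, fun N => ?_⟩
  calc ∑ x ∈ Finset.univ.filter
          (fun x : Fin N → X => ∀ t : X,
            |((Finset.univ.filter (fun j : Fin N => x j = t)).card : ℝ) / N
              - μ₁ t| ≤ δ),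
        ∏ j : Fin N, μ₀ (x j)
      ≤ ∑ x ∈ univ.filter (fun x : Fin N → X =>
          a * N ≤ ((univ.filter (fun j => P (x j))).card : ℝ)),
        ∏ j : Fin N, μ₀ (x j) := by
        apply Finset.sum_le_sum_of_subset_of_nonneg
        · apply Finset.monotone_filter_right
          intro x _ hx
          exact hincl N x hx
        · intro x _ _
          exact Finset.prod_nonneg fun j _ => (hμ₀ _).le
    _ ≤ r ^ N := hbd N

set_option maxHeartbeats 1000000 in
theorem type_deviation_exponentially_small
    (X : Type*) [Fintype X] [Nonempty X]
    (μ₀ μ₁ : X → ℝ)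
    (hμ₀ : ∀ t, 0 < μ₀ t) (hμ₀1 : ∑ t, μ₀ t = 1)
    (hμ₁0 : ∀ t, 0 ≤ μ₁ t) (hμ₁1 : ∑ t, μ₁ t = 1)
    (hne : μ₁ ≠ μ₀) :
    ∃ δ : ℝ, 0 < δ ∧
      Filter.limsup
        (fun N : ℕ => (1 / (N : ℝ)) *
          Real.log
            (∑ x ∈ Finset.univ.filter
                (fun x : Fin N → X => ∀ t : X,
                  |((Finset.univ.filter (fun j : Fin N => x j = t)).card : ℝ) / N
                    - μ₁ t| ≤ δ),
              ∏ j : Fin N, μ₀ (x j)))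
        atTop < 0 := by
  classical
  obtain ⟨t₀, ht₀⟩ : ∃ t, μ₁ t ≠ μ₀ t := by
    by_contra h
    push_neg at h
    exact hne (funext h)
  set q := μ₁ t₀ with hqdef
  set pp := μ₀ t₀ with hppdef
  have hq0 : 0 ≤ q := hμ₁0 t₀
  have hq1 : q ≤ 1 := by
    rw [← hμ₁1]
    exact Finset.single_le_sum (fun t _ => hμ₁0 t) (mem_univ t₀)
  have hpp0 : 0 < pp := hμ₀ t₀
  have hpp1 : pp ≤ 1 := by
    rw [← hμ₀1]
    exact Finset.single_le_sum (fun t _ => (hμ₀ t).le) (mem_univ t₀)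
  set ε := |q - pp| with hεdef
  have hε0 : 0 < ε := abs_pos.2 (sub_ne_zero.2 ht₀)
  set δ := ε / 2 with hδdef
  have hδ0 : 0 < δ := by positivity
  refine ⟨δ, hδ0, ?_⟩
  obtain ⟨r, hr0, hr1, hbd⟩ : ∃ r : ℝ, 0 < r ∧ r < 1 ∧ ∀ N : ℕ,
      ∑ x ∈ Finset.univ.filter
          (fun x : Fin N → X => ∀ t : X,
            |((Finset.univ.filter (fun j : Fin N => x j = t)).card : ℝ) / N
              - μ₁ t| ≤ δ),
        ∏ j : Fin N, μ₀ (x j) ≤ r ^ N := by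
    have hsingle : ∑ t ∈ univ.filter (fun t => t = t₀), μ₀ t = pp := by
      rw [Finset.filter_eq' univ t₀, if_pos (mem_univ t₀), Finset.sum_singleton]
    rcases lt_or_gt_of_ne ht₀ with hlt | hgt
    · -- q < pp : use P t = ¬ (t = t₀)
      have hεeq : ε = pp - q := by
        rw [hεdef, abs_of_neg (by linarith : q - pp < 0)]; ring
      apply deviation_bound μ₀ μ₁ δ hμ₀ hμ₀1 (fun t => ¬ (t = t₀)) (1 - q - δ)
      · have h := Finset.sum_filter_add_sum_filter_not univ (fun t => t = t₀) μ₀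
        rw [hsingle, hμ₀1] at h
        have hco : ∑ t ∈ univ.filter (fun t => ¬ (t = t₀)), μ₀ t = 1 - pp := by linarith
        rw [hco]
        linarith [hεeq, hδdef]
      · linarith
      · intro N x hx
        rcases Nat.eq_zero_or_pos N with hN | hN
        · subst hN
          simpa using Nat.cast_nonneg _
        have hNR : (0:ℝ) < N := by exact_mod_cast hN
        set c := ((univ.filter (fun j => x j = t₀)).card : ℕ) with hcdef
        have hcc : (c:ℝ) / N ≤ q + δ := by
          have := (abs_le.1 (hx t₀)).2
          linarith
        have hcN : (c:ℝ) ≤ (q + δ) * N := by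
          rw [div_le_iff₀ hNR] at hcc
          exact hcc
        have hcards := Finset.card_filter_add_card_filter_not
          (s := (univ : Finset (Fin N))) (p := fun j => x j = t₀)
        simp only [Finset.card_univ, Fintype.card_fin] at hcards
        have hsplit : (((univ.filter (fun j => ¬ (x j = t₀))).card : ℝ))
            = N - c := by
          rw [hcdef]
          push_cast [← hcards]
          ring
        rw [hsplit]
        nlinarith
    · -- q > pp : use P t = (t = t₀)
      have hεeq : ε = q - pp := by
        rw [hεdef, abs_of_pos (by linarith : 0 < q - pp)]
      apply deviation_bound μ₀ μ₁ δ hμ₀ hμ₀1 (fun t => t = t₀) (q - δ)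
      · rw [hsingle]
        linarith [hεeq, hδdef]
      · linarith
      · intro N x hx
        rcases Nat.eq_zero_or_pos N with hN | hN
        · subst hN
          simpa using Nat.cast_nonneg _
        have hNR : (0:ℝ) < N := by exact_mod_cast hN
        have hc := (abs_le.1 (hx t₀)).1
        have h2 : q - δ ≤ ((univ.filter (fun j => x j = t₀)).card : ℝ) / N := by
          linarith
        rw [le_div_iff₀ hNR] at h2
        linarith
  obtain ⟨tm, _, htm⟩ := Finset.exists_min_image (univ : Finset X) μ₀ univ_nonempty
  set m := μ₀ tm with hmdef
  have hm0 : 0 < m := hμ₀ tm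
  have hev : ∀ᶠ N in atTop, Real.log m ≤ (fun N : ℕ => (1 / (N : ℝ)) *
      Real.log
        (∑ x ∈ Finset.univ.filter
            (fun x : Fin N → X => ∀ t : X,
              |((Finset.univ.filter (fun j : Fin N => x j = t)).card : ℝ) / N
                - μ₁ t| ≤ δ),
          ∏ j : Fin N, μ₀ (x j))) N ∧
      (fun N : ℕ => (1 / (N : ℝ)) *
      Real.log
        (∑ x ∈ Finset.univ.filter
            (fun x : Fin N → X => ∀ t : X,
              |((Finset.univ.filter (fun j : Fin N => x j = t)).card : ℝ) / N
                - μ₁ t| ≤ δ),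
          ∏ j : Fin N, μ₀ (x j))) N ≤ Real.log r := by
    rw [eventually_atTop]
    refine ⟨⌈(Fintype.card X : ℝ) / δ⌉₊ + 1, fun N hN => ?_⟩
    have hNpos : 0 < N := lt_of_lt_of_le (Nat.succ_pos _) hN
    have hNR : (0:ℝ) < N := by exact_mod_cast hNpos
    have hcardX : (Fintype.card X : ℝ) ≤ δ * N := by
      have h1 : (Fintype.card X : ℝ) / δ ≤ (⌈(Fintype.card X : ℝ) / δ⌉₊ : ℝ) :=
        Nat.le_ceil _
      have h2 : ((⌈(Fintype.card X : ℝ) / δ⌉₊ : ℕ) : ℝ) ≤ N := by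
        exact_mod_cast le_trans (Nat.le_succ _) hN
      have := le_trans h1 h2
      rw [div_le_iff₀ hδ0] at this
      linarith
    set Δ := Finset.univ.filter
        (fun x : Fin N → X => ∀ t : X,
          |((Finset.univ.filter (fun j : Fin N => x j = t)).card : ℝ) / N
            - μ₁ t| ≤ δ) with hΔdef
    set S := ∑ x ∈ Δ, ∏ j : Fin N, μ₀ (x j) with hSdef
    -- nonemptiness : construct an element of Δ
    have hkey : ∃ x₀ : Fin N → X, x₀ ∈ Δ := by
      set t' : X := Classical.arbitrary X with ht'def
      set Sf : ℕ := ∑ t ∈ univ.erase t', ⌊(N:ℝ) * μ₁ t⌋₊ with hSfdef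
      have hSfle : (Sf : ℝ) ≤ N := by
        rw [hSfdef]
        push_cast
        calc ∑ t ∈ univ.erase t', ((⌊(N:ℝ) * μ₁ t⌋₊ : ℕ) : ℝ)
            ≤ ∑ t ∈ univ.erase t', (N:ℝ) * μ₁ t :=
              Finset.sum_le_sum fun t _ => Nat.floor_le (mul_nonneg hNR.le (hμ₁0 t))
          _ = N * ∑ t ∈ univ.erase t', μ₁ t := by rw [Finset.mul_sum]
          _ ≤ N * 1 := by
              apply mul_le_mul_of_nonneg_left _ hNR.le
              rw [← hμ₁1]
              exact Finset.sum_le_sum_of_subset_of_nonneg (Finset.erase_subset _ _)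
                (fun t _ _ => hμ₁0 t)
          _ = N := by ring
      have hSfleN : Sf ≤ N := by exact_mod_cast hSfle
      set k : X → ℕ := fun t => if t = t' then N - Sf else ⌊(N:ℝ) * μ₁ t⌋₊ with hkdef
      have hksum : ∑ t, k t = N := by
        rw [← Finset.add_sum_erase _ k (mem_univ t')]
        have h1 : k t' = N - Sf := by rw [hkdef]; simp
        have h2 : ∑ t ∈ univ.erase t', k t = Sf := by
          rw [hSfdef]
          apply Finset.sum_congr rfl
          intro t ht
          rw [hkdef]
          simp [Finset.ne_of_mem_erase ht]
        rw [h1, h2, Nat.sub_add_cancel hSfleN]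
      have hclose : ∀ t, |(k t : ℝ) - N * μ₁ t| ≤ δ * N := by
        intro t
        by_cases ht : t = t'
        · rw [ht]
          have hkt : (k t' : ℝ) = N - Sf := by
            rw [hkdef]
            simp only [if_pos rfl]
            push_cast [Nat.cast_sub hSfleN]
            ring
          have hμsplit : (N:ℝ) * μ₁ t' = N - ∑ s ∈ univ.erase t', (N:ℝ) * μ₁ s := by
            have := Finset.add_sum_erase univ μ₁ (mem_univ t')
            rw [hμ₁1] at this
            rw [← Finset.mul_sum]
            nlinarith [this]
          have hSfcast : (Sf : ℝ) = ∑ s ∈ univ.erase t', ((⌊(N:ℝ) * μ₁ s⌋₊ : ℕ) : ℝ) := by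
            rw [hSfdef]; push_cast; ring
          rw [hkt, hμsplit, hSfcast]
          have hdiff : (N:ℝ) - (∑ s ∈ univ.erase t', ((⌊(N:ℝ) * μ₁ s⌋₊ : ℕ) : ℝ))
              - ((N:ℝ) - ∑ s ∈ univ.erase t', (N:ℝ) * μ₁ s)
              = ∑ s ∈ univ.erase t', ((N:ℝ) * μ₁ s - ((⌊(N:ℝ) * μ₁ s⌋₊ : ℕ) : ℝ)) := by
            rw [Finset.sum_sub_distrib]
            ring
          rw [abs_le]
          constructor
          · have hnn : 0 ≤ ∑ s ∈ univ.erase t', ((N:ℝ) * μ₁ s - ((⌊(N:ℝ) * μ₁ s⌋₊ : ℕ) : ℝ)) :=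
              Finset.sum_nonneg fun s _ => by
                have := Nat.floor_le (mul_nonneg hNR.le (hμ₁0 s))
                linarith
            linarith [hdiff, mul_nonneg hδ0.le hNR.le]
          · have hub : ∑ s ∈ univ.erase t', ((N:ℝ) * μ₁ s - ((⌊(N:ℝ) * μ₁ s⌋₊ : ℕ) : ℝ))
                ≤ (Fintype.card X : ℝ) := by
              calc ∑ s ∈ univ.erase t', ((N:ℝ) * μ₁ s - ((⌊(N:ℝ) * μ₁ s⌋₊ : ℕ) : ℝ))
                  ≤ ∑ s ∈ univ.erase t', (1:ℝ) := by
                    apply Finset.sum_le_sum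
                    intro s _
                    have := Nat.lt_floor_add_one ((N:ℝ) * μ₁ s)
                    linarith
                _ = ((univ.erase t').card : ℝ) := by simp
                _ ≤ (Fintype.card X : ℝ) := by
                    have : (univ.erase t').card ≤ (univ : Finset X).card :=
                      Finset.card_le_card (Finset.erase_subset _ _)
                    simpa using Nat.cast_le.2 this
            linarith [hdiff, hcardX]
        · have hkt : (k t : ℝ) = ((⌊(N:ℝ) * μ₁ t⌋₊ : ℕ) : ℝ) := by
            rw [hkdef]; simp [ht]
          rw [hkt, abs_le]
          have hfl := Nat.floor_le (mul_nonneg hNR.le (hμ₁0 t))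
          have hfu := Nat.lt_floor_add_one ((N:ℝ) * μ₁ t)
          have hone : (1:ℝ) ≤ δ * N := by
            have : (1:ℝ) ≤ (Fintype.card X : ℝ) := by
              exact_mod_cast Fintype.card_pos
            linarith
          constructor <;> nlinarith
      obtain ⟨x₀, hx₀⟩ := exists_count k N hksum
      refine ⟨x₀, ?_⟩
      rw [hΔdef, Finset.mem_filter]
      refine ⟨mem_univ _, fun t => ?_⟩
      rw [hx₀ t]
      have habs : |(k t : ℝ) / N - μ₁ t| = |(k t : ℝ) - N * μ₁ t| / N := by
        rw [← abs_of_pos hNR, ← abs_div]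
        congr 1
        field_simp
        rw [abs_of_pos hNR]; ring
      rw [habs, div_le_iff₀ hNR]
      calc |(k t : ℝ) - N * μ₁ t| ≤ δ * N := hclose t
        _ = δ * N := rfl
    obtain ⟨x₀, hx₀⟩ := hkey
    have hSpos : 0 < S := by
      rw [hSdef]
      apply Finset.sum_pos' (fun x _ => Finset.prod_nonneg fun j _ => (hμ₀ _).le)
      exact ⟨x₀, hx₀, Finset.prod_pos fun j _ => hμ₀ _⟩
    have hSlow : m ^ N ≤ S := by
      calc m ^ N = ∏ j : Fin N, m := by rw [Finset.prod_const]; simp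
        _ ≤ ∏ j : Fin N, μ₀ (x₀ j) :=
          Finset.prod_le_prod (fun j _ => hm0.le) (fun j _ => htm (x₀ j) (mem_univ _))
        _ ≤ S := by
          rw [hSdef]
          exact Finset.single_le_sum (f := fun x : Fin N → X => ∏ j : Fin N, μ₀ (x j))
            (fun x _ => Finset.prod_nonneg fun j _ => (hμ₀ _).le) hx₀
    have hSle : S ≤ r ^ N := hbd N
    constructor
    · show Real.log m ≤ (1 / (N:ℝ)) * Real.log S
      have hlog : (N:ℝ) * Real.log m ≤ Real.log S := by
        rw [← Real.log_pow]
        exact (Real.log_le_log_iff (pow_pos hm0 N) hSpos).2 hSlow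
      rw [show Real.log m = (1 / (N:ℝ)) * ((N:ℝ) * Real.log m) by field_simp]
      exact mul_le_mul_of_nonneg_left hlog (by positivity)
    · show (1 / (N:ℝ)) * Real.log S ≤ Real.log r
      have hlog : Real.log S ≤ (N:ℝ) * Real.log r := by
        rw [← Real.log_pow]
        exact (Real.log_le_log_iff hSpos (pow_pos hr0 N)).2 hSle
      calc (1 / (N:ℝ)) * Real.log S ≤ (1 / (N:ℝ)) * ((N:ℝ) * Real.log r) :=
          mul_le_mul_of_nonneg_left hlog (by positivity)
        _ = Real.log r := by field_simp
  have h0 := hev.mono fun N h => h.1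
  have h1 := hev.mono fun N h => h.2
  exact lt_of_le_of_lt
    (Filter.limsup_le_of_le (isCoboundedUnder_le_of_eventually_le atTop h0) h1)
    (Real.log_neg hr0 hr1)
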